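/- Define ψ₊(u) = u + 2√(Δ·γ(u))·log(e/γ(u)) on [0,1] where γ(u) = min{u, 1−u} and 0 < Δ ≤ (10κ)^{-2} with κ = 400, and let δ = κΔ log²(e/Δ). Then for every u ∈ [δ, 1−δ]: (1) ψ₊(u) ∈ [Δ, 1−Δ]; (2) |ψ₊(u) − u| ≤ (1/10)·γ(u). -/
import Mathlib


open Set

theorem stmt6 (Δ : ℝ) (hΔ : 0 < Δ) (hΔ' : Δ ≤ ((10 * 400 : ℝ) ^ 2)⁻¹) :
    ∀ u ∈ Icc (400 * Δ * (Real.log (Real.exp 1 / Δ)) ^ 2)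
        (1 - 400 * Δ * (Real.log (Real.exp 1 / Δ)) ^ 2),
      (u + 2 * Real.sqrt (Δ * min u (1 - u)) * Real.log (Real.exp 1 / min u (1 - u)) ∈
          Icc Δ (1 - Δ)) ∧
      |(u + 2 * Real.sqrt (Δ * min u (1 - u)) * Real.log (Real.exp 1 / min u (1 - u))) - u| ≤
        (1 / 10) * min u (1 - u) := by
  intro u hu
  obtain ⟨hu1, hu2⟩ := hu
  set L := Real.log (Real.exp 1 / Δ) with hLdef
  set γ := min u (1 - u) with hγdef
  have hΔ1 : Δ ≤ 1 := le_trans hΔ' (by norm_num)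
  have hL : L = 1 - Real.log Δ := by
    rw [hLdef, Real.log_div (Real.exp_ne_zero 1) hΔ.ne', Real.log_exp]
  have hL1 : (1 : ℝ) ≤ L := by
    have : Real.log Δ ≤ 0 := Real.log_nonpos hΔ.le hΔ1
    linarith [hL]
  have hδpos : 0 < 400 * Δ * L ^ 2 := by positivity
  have hL2 : (1 : ℝ) ≤ L ^ 2 := by nlinarith
  have hδΔ : 400 * Δ ≤ 400 * Δ * L ^ 2 := by nlinarith [mul_le_mul_of_nonneg_left hL2 (by positivity : (0:ℝ) ≤ 400 * Δ)]
  have hγδ : 400 * Δ * L ^ 2 ≤ γ := le_min hu1 (by linarith)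
  have hγpos : 0 < γ := lt_of_lt_of_le hδpos hγδ
  have hγ1 : γ ≤ 1 := le_trans (min_le_left _ _) (by linarith)
  have hΔγ : Δ ≤ γ := by nlinarith
  have hloge : Real.log (Real.exp 1 / γ) ≤ L := by
    rw [hLdef]
    apply Real.log_le_log (by positivity)
    exact div_le_div_of_nonneg_left (Real.exp_pos 1).le hΔ hΔγ
  have hlog0 : 0 ≤ Real.log (Real.exp 1 / γ) := by
    apply Real.log_nonneg
    rw [le_div_iff₀ hγpos, one_mul]
    calc γ ≤ 1 := hγ1
    _ ≤ Real.exp 1 := by linarith [Real.add_one_le_exp 1]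
  have hsqrt : Real.sqrt (Δ * γ) ≤ γ / (20 * L) := by
    have h20L : 0 < 20 * L := by linarith
    rw [show γ / (20 * L) = Real.sqrt ((γ / (20 * L)) ^ 2) from
      (Real.sqrt_sq (by positivity)).symm]
    apply Real.sqrt_le_sqrt
    rw [div_pow, le_div_iff₀ (by positivity)]
    nlinarith
  have hT : 2 * Real.sqrt (Δ * γ) * Real.log (Real.exp 1 / γ) ≤ γ / 10 := by
    have h1 : 2 * Real.sqrt (Δ * γ) * Real.log (Real.exp 1 / γ)
        ≤ 2 * (γ / (20 * L)) * L := by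
      apply mul_le_mul _ hloge hlog0 (by positivity)
      linarith [hsqrt]
    have h2 : 2 * (γ / (20 * L)) * L = γ / 10 := by
      field_simp
      ring
    linarith
  have hT0 : 0 ≤ 2 * Real.sqrt (Δ * γ) * Real.log (Real.exp 1 / γ) := by
    have := Real.sqrt_nonneg (Δ * γ)
    positivity
  refine ⟨⟨by nlinarith, ?_⟩, ?_⟩
  · -- ψ₊ ≤ 1 - Δ
    have hγu : γ ≤ 1 - u := min_le_right _ _
    nlinarith
  · rw [add_sub_cancel_left, abs_of_nonneg hT0]
    linarith
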